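/- arXiv:2505.02036 — 2 statements merged into one kernel-verified Lean document; each statement's English description precedes it below -/
import Mathlib

section
/- Let a < b be real numbers, p ≥ 2, and let u : ℝ → ℝ be differentiable on [a,b] with continuous derivative u′ on [a,b]. Then ∫_a^b |u(t)|^p dt ≤ ( (b−a)^{−1} ∫_a^b u² dt + 2 (∫_a^b u² dt)^{1/2} (∫_a^b u′² dt)^{1/2} )^{(p−2)/2} · ∫_a^b u(t)² dt. -/
open MeasureTheory Set intervalIntegral

/-- One-dimensional Gagliardo–Nirenberg-type inequality on a bounded interval:
for `p ≥ 2` and `u` differentiable on `[a,b]` with continuous derivative `u'`,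
`∫ |u|^p ≤ ((b−a)⁻¹ ∫ u² + 2 (∫ u²)^{1/2} (∫ u'²)^{1/2})^{(p−2)/2} · ∫ u²`. -/
theorem gagliardo_nirenberg_interval (a b : ℝ) (hab : a < b) (p : ℝ) (hp : 2 ≤ p)
    (u u' : ℝ → ℝ)
    (hu : ∀ x ∈ Set.Icc a b, HasDerivWithinAt u (u' x) (Set.Icc a b) x)
    (hu' : ContinuousOn u' (Set.Icc a b)) :
    ∫ t in a..b, |u t| ^ p ≤
      ((b - a)⁻¹ * (∫ t in a..b, (u t) ^ 2)
        + 2 * Real.sqrt (∫ t in a..b, (u t) ^ 2) * Real.sqrt (∫ t in a..b, (u' t) ^ 2))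
          ^ ((p - 2) / 2) * ∫ t in a..b, (u t) ^ 2 := by
  have hle : a ≤ b := hab.le
  set I := ∫ t in a..b, (u t) ^ 2 with hIdef
  set J := ∫ t in a..b, (u' t) ^ 2 with hJdef
  set S := (b - a)⁻¹ * I + 2 * Real.sqrt I * Real.sqrt J with hSdef
  have hcu : ContinuousOn u (Set.Icc a b) := fun x hx => (hu x hx).continuousWithinAt
  have hcu2 : ContinuousOn (fun t => (u t) ^ 2) (Set.Icc a b) := hcu.pow 2
  have hIu2 : IntervalIntegrable (fun t => (u t) ^ 2) volume a b :=
    hcu2.intervalIntegrable_of_Icc hle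
  have hIu'2 : IntervalIntegrable (fun t => (u' t) ^ 2) volume a b :=
    (hu'.pow 2).intervalIntegrable_of_Icc hle
  have hI0 : 0 ≤ I := intervalIntegral.integral_nonneg hle fun t _ => sq_nonneg _
  have hJ0 : 0 ≤ J := intervalIntegral.integral_nonneg hle fun t _ => sq_nonneg _
  have hS0 : 0 ≤ S := by
    have h1 : (0:ℝ) ≤ (b - a)⁻¹ * I :=
      mul_nonneg (inv_nonneg.2 (by linarith)) hI0
    have h2 : (0:ℝ) ≤ 2 * Real.sqrt I * Real.sqrt J := by positivity
    rw [hSdef]; exact add_nonneg h1 h2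
  -- Cauchy–Schwarz
  have CS : (∫ t in a..b, |u t| * |u' t|) ≤ Real.sqrt I * Real.sqrt J := by
    have hpq : (2:ℝ).HolderConjugate 2 := Real.HolderConjugate.two_two
    have hmeasu : AEStronglyMeasurable (fun t => |u t|)
        (volume.restrict (Set.Ioc a b)) :=
      ((hcu.mono Set.Ioc_subset_Icc_self).abs).aestronglyMeasurable measurableSet_Ioc
    have hmeasu' : AEStronglyMeasurable (fun t => |u' t|)
        (volume.restrict (Set.Ioc a b)) :=
      ((hu'.mono Set.Ioc_subset_Icc_self).abs).aestronglyMeasurable measurableSet_Ioc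
    have hint1 : Integrable (fun t => |u t| ^ 2) (volume.restrict (Set.Ioc a b)) := by
      have := hIu2.1
      simp only [sq_abs]; exact this
    have hint2 : Integrable (fun t => |u' t| ^ 2) (volume.restrict (Set.Ioc a b)) := by
      have := hIu'2.1
      simp only [sq_abs]; exact this
    have hmemu : MemLp (fun t => |u t|) (ENNReal.ofReal 2)
        (volume.restrict (Set.Ioc a b)) := by
      rw [show ENNReal.ofReal 2 = 2 by norm_num]
      exact (memLp_two_iff_integrable_sq hmeasu).2 hint1
    have hmemu' : MemLp (fun t => |u' t|) (ENNReal.ofReal 2)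
        (volume.restrict (Set.Ioc a b)) := by
      rw [show ENNReal.ofReal 2 = 2 by norm_num]
      exact (memLp_two_iff_integrable_sq hmeasu').2 hint2
    have H := integral_mul_le_Lp_mul_Lq_of_nonneg hpq
      (Filter.Eventually.of_forall fun t => abs_nonneg (u t))
      (Filter.Eventually.of_forall fun t => abs_nonneg (u' t)) hmemu hmemu'
    have e1 : (∫ t in Set.Ioc a b, |u t| ^ (2:ℝ)) = I := by
      rw [hIdef, intervalIntegral.integral_of_le hle]
      apply setIntegral_congr_fun measurableSet_Ioc
      intro t _
      simp [Real.rpow_two, sq_abs]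
    have e2 : (∫ t in Set.Ioc a b, |u' t| ^ (2:ℝ)) = J := by
      rw [hJdef, intervalIntegral.integral_of_le hle]
      apply setIntegral_congr_fun measurableSet_Ioc
      intro t _
      simp [Real.rpow_two, sq_abs]
    rw [intervalIntegral.integral_of_le hle]
    calc (∫ t in Set.Ioc a b, |u t| * |u' t|)
        ≤ (∫ t in Set.Ioc a b, |u t| ^ (2:ℝ)) ^ (1/(2:ℝ)) *
            (∫ t in Set.Ioc a b, |u' t| ^ (2:ℝ)) ^ (1/(2:ℝ)) := H
      _ = Real.sqrt I * Real.sqrt J := by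
          rw [e1, e2, Real.sqrt_eq_rpow, Real.sqrt_eq_rpow]
  -- integrability of |2 u u'| on [a,b]
  have hcabs : ContinuousOn (fun t => |2 * u t * u' t|) (Set.Icc a b) :=
    ((continuousOn_const.mul hcu).mul hu').abs
  have hIabs : IntervalIntegrable (fun t => |2 * u t * u' t|) volume a b :=
    hcabs.intervalIntegrable_of_Icc hle
  have habs_eq : (∫ t in a..b, |2 * u t * u' t|)
      = 2 * ∫ t in a..b, |u t| * |u' t| := by
    rw [← intervalIntegral.integral_const_mul]
    apply intervalIntegral.integral_congr
    intro t _
    simp [abs_mul, abs_two, mul_assoc]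
  -- bound on subinterval integrals of 2 u u'
  have key : ∀ y z : ℝ, y ∈ Set.Icc a b → z ∈ Set.Icc a b →
      |∫ t in y..z, 2 * u t * u' t| ≤ 2 * (Real.sqrt I * Real.sqrt J) := by
    have key' : ∀ y z : ℝ, y ∈ Set.Icc a b → z ∈ Set.Icc a b → y ≤ z →
        |∫ t in y..z, 2 * u t * u' t| ≤ 2 * (Real.sqrt I * Real.sqrt J) := by
      intro y z hy hz hyz
      calc |∫ t in y..z, 2 * u t * u' t|
          ≤ ∫ t in y..z, |2 * u t * u' t| :=
            intervalIntegral.abs_integral_le_integral_abs hyz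
        _ ≤ ∫ t in a..b, |2 * u t * u' t| :=
            intervalIntegral.integral_mono_interval hy.1 hyz hz.2
              (Filter.Eventually.of_forall fun t => abs_nonneg _) hIabs
        _ = 2 * ∫ t in a..b, |u t| * |u' t| := habs_eq
        _ ≤ 2 * (Real.sqrt I * Real.sqrt J) := by linarith
    intro y z hy hz
    rcases le_total y z with h | h
    · exact key' y z hy hz h
    · rw [intervalIntegral.integral_symm, abs_neg]
      exact key' z y hz hy h
  -- minimum point of u²
  obtain ⟨c, hc, hcmin⟩ := isCompact_Icc.exists_isMinOn (Set.nonempty_Icc.2 hle) hcu2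
  have hmean : (u c) ^ 2 ≤ (b - a)⁻¹ * I := by
    have h1 : (b - a) * (u c) ^ 2 ≤ I := by
      have := intervalIntegral.integral_mono_on hle
        (_root_.intervalIntegrable_const (c := (u c) ^ 2)) hIu2
        (fun t ht => hcmin ht)
      simpa [smul_eq_mul] using this
    rw [inv_mul_eq_div, le_div_iff₀ (by linarith)]
    linarith [h1]
  -- FTC: u x ² - u c ² = ∫ c..x 2 u u'
  have ftc : ∀ x ∈ Set.Icc a b,
      (∫ t in c..x, 2 * u t * u' t) = (u x) ^ 2 - (u c) ^ 2 := by
    intro x hx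
    have hsub : Set.uIcc c x ⊆ Set.Icc a b := Set.uIcc_subset_Icc hc hx
    apply intervalIntegral.integral_eq_sub_of_hasDeriv_right
    · exact hcu2.mono hsub
    · intro y hy
      have hy' : y ∈ Set.Ioo a b := by
        constructor
        · exact lt_of_le_of_lt (le_min hc.1 hx.1) hy.1
        · exact lt_of_lt_of_le hy.2 (max_le hc.2 hx.2)
      have hda : HasDerivAt u (u' y) y :=
        (hu y (Set.Ioo_subset_Icc_self hy')).hasDerivAt
          (Icc_mem_nhds hy'.1 hy'.2)
      have := hda.fun_pow 2
      have h2 : HasDerivAt (fun t => (u t) ^ 2) (2 * u y * u' y) y := by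
        refine this.congr_deriv ?_
        ring
      exact h2.hasDerivWithinAt
    · exact (((continuousOn_const.mul hcu).mul hu').mono hsub).intervalIntegrable
  -- pointwise bound u x ² ≤ S
  have hsup : ∀ x ∈ Set.Icc a b, (u x) ^ 2 ≤ S := by
    intro x hx
    have h1 := ftc x hx
    have h2 := key c x hc hx
    have h3 : (u x) ^ 2 - (u c) ^ 2 ≤ 2 * (Real.sqrt I * Real.sqrt J) := by
      rw [← h1]
      exact (le_abs_self _).trans h2
    rw [hSdef]
    have := hmean
    nlinarith [h3, this]
  -- pointwise bound |u|^p ≤ S^((p-2)/2) u²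
  have hpt : ∀ t ∈ Set.Icc a b, |u t| ^ p ≤ S ^ ((p - 2) / 2) * (u t) ^ 2 := by
    intro t ht
    have habs : (0:ℝ) ≤ |u t| := abs_nonneg _
    have e1 : |u t| ^ p = ((u t) ^ 2) ^ ((p - 2) / 2) * (u t) ^ 2 := by
      rw [← sq_abs (u t), ← Real.rpow_natCast (|u t|) 2, ← Real.rpow_mul habs]
      rw [show ((2:ℕ):ℝ) * ((p - 2) / 2) = p - 2 by push_cast; ring]
      rw [show (|u t| ^ ((2:ℕ):ℝ)) = |u t| ^ ((2:ℝ)) by norm_num]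
      rw [← Real.rpow_add' habs (by intro h; rw [sub_add_cancel] at h; linarith)]
      rw [sub_add_cancel]
    rw [e1]
    apply mul_le_mul_of_nonneg_right _ (sq_nonneg _)
    exact Real.rpow_le_rpow (sq_nonneg _) (hsup t ht) (by linarith)
  -- integrate
  have hintp : IntervalIntegrable (fun t => |u t| ^ p) volume a b := by
    apply ContinuousOn.intervalIntegrable_of_Icc hle
    exact hcu.abs.rpow_const fun x hx => Or.inr (by linarith)
  have hintS : IntervalIntegrable (fun t => S ^ ((p - 2) / 2) * (u t) ^ 2) volume a b :=
    hIu2.const_mul _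
  calc (∫ t in a..b, |u t| ^ p)
      ≤ ∫ t in a..b, S ^ ((p - 2) / 2) * (u t) ^ 2 :=
        intervalIntegral.integral_mono_on hle hintp hintS hpt
    _ = S ^ ((p - 2) / 2) * I := intervalIntegral.integral_const_mul _ _
end

section
/- Let (Ω, μ) be a measure space with μ(Ω) < ∞, let E be a finite-dimensional real normed vector space, and let r : E → ℝ be continuous with: (a) there exists C ≥ 0 such that |r(z)| ≤ C‖z‖² for all z ∈ E, and (b) r(z)/‖z‖² → 0 as ‖z‖ → ∞. Let (v_n) be a sequence of measurable functions Ω → E with sup_n ∫_Ω ‖v_n‖² dμ < ∞, and let (t_n) be positive reals with t_n → ∞. Then (1/t_n²) ∫_Ω r(t_n · v_n(x)) dμ(x) → 0 as n → ∞. -/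
open MeasureTheory Filter
open scoped ENNReal

/-- Limit (4.17) in the proof of Lemma 4.3: if `|r z| ≤ C‖z‖²`, `r z/‖z‖² → 0`
as `‖z‖ → ∞`, the `v n` have uniformly bounded `L²`-norms on a finite measure
space, and `t n → ∞`, then `(1/t_n²) ∫ r(t_n v_n) dμ → 0`. -/
theorem remainder_integral_tendsto_zero {Ω E : Type*} [MeasurableSpace Ω]
    (μ : Measure Ω) [IsFiniteMeasure μ]
    [NormedAddCommGroup E] [NormedSpace ℝ E] [FiniteDimensional ℝ E]
    (r : E → ℝ) (hr : Continuous r)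
    (C : ℝ) (hC : 0 ≤ C) (hbound : ∀ z : E, |r z| ≤ C * ‖z‖ ^ 2)
    (hlim : Tendsto (fun z : E => r z / ‖z‖ ^ 2)
      (comap (fun z : E => ‖z‖) atTop) (nhds 0))
    (v : ℕ → Ω → E) (hv : ∀ n, AEStronglyMeasurable (v n) μ)
    (M : ℝ≥0∞) (hMfin : M < ⊤)
    (hM : ∀ n, ∫⁻ x, ENNReal.ofReal (‖v n x‖ ^ 2) ∂μ ≤ M)
    (t : ℕ → ℝ) (ht : ∀ n, 0 < t n) (htinf : Tendsto t atTop atTop) :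
    Tendsto (fun n => (t n ^ 2)⁻¹ * ∫ x, r (t n • v n x) ∂μ) atTop (nhds 0) := by
  set Mr := M.toReal with hMr
  have hMr0 : 0 ≤ Mr := ENNReal.toReal_nonneg
  set μr := (μ Set.univ).toReal with hμr
  have hμr0 : 0 ≤ μr := ENNReal.toReal_nonneg
  -- integrability of ‖v n‖²
  have hv2m : ∀ n, AEStronglyMeasurable (fun x => ‖v n x‖ ^ 2) μ := fun n =>
    ((hv n).norm.aemeasurable.pow_const 2).aestronglyMeasurable
  have hv2 : ∀ n, Integrable (fun x => ‖v n x‖ ^ 2) μ := by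
    intro n
    refine ⟨hv2m n, ?_⟩
    have heq : ∀ x, ‖‖v n x‖ ^ 2‖ₑ = ENNReal.ofReal (‖v n x‖ ^ 2) := by
      intro x
      rw [← ofReal_norm_eq_enorm, Real.norm_of_nonneg (by positivity)]
    rw [HasFiniteIntegral]
    simp_rw [heq]
    exact lt_of_le_of_lt (hM n) hMfin
  have hintv : ∀ n, ∫ x, ‖v n x‖ ^ 2 ∂μ ≤ Mr := by
    intro n
    rw [integral_eq_lintegral_of_nonneg_ae (ae_of_all _ fun x => by positivity)
      (hv2m n)]
    exact ENNReal.toReal_mono hMfin.ne (hM n)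
  rw [NormedAddCommGroup.tendsto_nhds_zero]
  intro ε hε
  set ε' := ε / (2 * (Mr + 1)) with hε'def
  have hε' : 0 < ε' := div_pos hε (by linarith)
  -- extract R
  have h1 := Metric.tendsto_nhds.mp hlim ε' hε'
  obtain ⟨s, hs, hsub⟩ := Filter.mem_comap.mp h1
  obtain ⟨R, hR⟩ := mem_atTop_sets.mp hs
  set R' : ℝ := max R 1 with hR'def
  have hR'1 : (1:ℝ) ≤ R' := le_max_right _ _
  have hkey : ∀ z : E, R' ≤ ‖z‖ → |r z| ≤ ε' * ‖z‖ ^ 2 := by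
    intro z hz
    have hz1 : (1:ℝ) ≤ ‖z‖ := le_trans hR'1 hz
    have hzR : R ≤ ‖z‖ := le_trans (le_max_left _ _) hz
    have hz2 : (0:ℝ) < ‖z‖ ^ 2 := by positivity
    have hmem : dist (r z / ‖z‖ ^ 2) 0 < ε' := hsub (hR _ hzR)
    rw [Real.dist_eq, sub_zero, abs_div, abs_of_pos hz2, div_lt_iff₀ hz2] at hmem
    exact le_of_lt hmem
  -- pointwise bound
  have hpt : ∀ n x, |r (t n • v n x)| ≤ C * R' ^ 2 + ε' * t n ^ 2 * ‖v n x‖ ^ 2 := by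
    intro n x
    have hn : ‖t n • v n x‖ = t n * ‖v n x‖ := by
      rw [norm_smul, Real.norm_of_nonneg (ht n).le]
    rcases le_or_gt ‖t n • v n x‖ R' with h | h
    · have h1 := hbound (t n • v n x)
      have h2 : C * ‖t n • v n x‖ ^ 2 ≤ C * R' ^ 2 := by
        apply mul_le_mul_of_nonneg_left _ hC
        exact pow_le_pow_left₀ (norm_nonneg _) h 2
      nlinarith [mul_nonneg (mul_nonneg hε'.le (sq_nonneg (t n))) (sq_nonneg ‖v n x‖)]
    · have h1 := hkey _ h.le
      rw [hn, mul_pow] at h1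
      nlinarith [mul_nonneg hC (sq_nonneg R')]
  -- integrability of r ∘ (t n • v n)
  have hrint : ∀ n, Integrable (fun x => r (t n • v n x)) μ := by
    intro n
    have hm : AEStronglyMeasurable (fun x => r (t n • v n x)) μ :=
      hr.comp_aestronglyMeasurable ((hv n).const_smul (t n))
    refine Integrable.mono' (g := fun x => C * R' ^ 2 + ε' * t n ^ 2 * ‖v n x‖ ^ 2)
      ?_ hm (ae_of_all _ fun x => by
        rw [Real.norm_eq_abs]; exact hpt n x)
    exact (integrable_const _).add (((hv2 n).const_mul _))
  -- integral bound
  have hIb : ∀ n, |∫ x, r (t n • v n x) ∂μ| ≤ C * R' ^ 2 * μr + ε' * t n ^ 2 * Mr := by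
    intro n
    calc |∫ x, r (t n • v n x) ∂μ| ≤ ∫ x, |r (t n • v n x)| ∂μ := by
          simpa [Real.norm_eq_abs] using
            norm_integral_le_integral_norm (fun x => r (t n • v n x)) (μ := μ)
      _ ≤ ∫ x, (C * R' ^ 2 + ε' * t n ^ 2 * ‖v n x‖ ^ 2) ∂μ := by
          refine integral_mono (hrint n).abs
            ((integrable_const _).add ((hv2 n).const_mul _)) fun x => hpt n x
      _ = C * R' ^ 2 * μr + ε' * t n ^ 2 * ∫ x, ‖v n x‖ ^ 2 ∂μ := by
          rw [integral_add (integrable_const _) ((hv2 n).const_mul _),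
            integral_const, integral_const_mul, smul_eq_mul, mul_comm, hμr, Measure.real]
      _ ≤ C * R' ^ 2 * μr + ε' * t n ^ 2 * Mr := by
          gcongr
          exact hintv n
  -- final bound per n
  have hfb : ∀ n, ‖(t n ^ 2)⁻¹ * ∫ x, r (t n • v n x) ∂μ‖
      ≤ C * R' ^ 2 * μr * (t n ^ 2)⁻¹ + ε' * Mr := by
    intro n
    have ht2 : (0:ℝ) < t n ^ 2 := pow_pos (ht n) 2
    rw [Real.norm_eq_abs, abs_mul, abs_inv, abs_of_pos ht2]
    calc (t n ^ 2)⁻¹ * |∫ x, r (t n • v n x) ∂μ|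
        ≤ (t n ^ 2)⁻¹ * (C * R' ^ 2 * μr + ε' * t n ^ 2 * Mr) := by
          gcongr; exact hIb n
      _ = C * R' ^ 2 * μr * (t n ^ 2)⁻¹ + ε' * Mr := by
          have h := ht2.ne'
          rw [mul_add]
          congr 1
          · ring
          · rw [mul_comm ε' (t n ^ 2), mul_assoc, ← mul_assoc, inv_mul_cancel₀ h, one_mul]
  have hεM : ε' * Mr < ε / 2 := by
    rw [hε'def, div_mul_eq_mul_div, div_lt_iff₀ (by linarith : (0:ℝ) < 2 * (Mr + 1))]
    nlinarith
  -- the first term tends to 0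
  have hA : Tendsto (fun n => C * R' ^ 2 * μr * (t n ^ 2)⁻¹) atTop (nhds 0) := by
    have h2 : Tendsto (fun n => (t n ^ 2)⁻¹) atTop (nhds 0) :=
      tendsto_inv_atTop_zero.comp ((tendsto_pow_atTop two_ne_zero).comp htinf)
    simpa using h2.const_mul (C * R' ^ 2 * μr)
  have hev : ∀ᶠ n in atTop, C * R' ^ 2 * μr * (t n ^ 2)⁻¹ < ε / 2 :=
    hA.eventually_lt_const (half_pos hε)
  filter_upwards [hev] with n hn
  calc ‖(t n ^ 2)⁻¹ * ∫ x, r (t n • v n x) ∂μ‖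
      ≤ C * R' ^ 2 * μr * (t n ^ 2)⁻¹ + ε' * Mr := hfb n
    _ < ε / 2 + ε / 2 := by linarith
    _ = ε := by ring
end
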